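/- Let G be a graph containing an edge vw with deg_G(v) = 1 and deg_G(w) = 2. Then γ_WC(G) = 1 + γ_WC(G − {v, w}) and s_WC(G) = 1 + s_WC(G − {v, w}). -/

import Mathlib

/-- `D` is a dominating set of `G`. -/
def IsDomSet {V : Type} (G : SimpleGraph V) (D : Set V) : Prop :=
  ∀ v, v ∈ D ∨ ∃ u ∈ D, G.Adj u v

/-- The unbiased Waiter-Client game on the hypergraph with winning sets `F`.
`wcWin F t W C` means: with Waiter owning `W` and Client owning `C`, Waiter has
a strategy to claim all elements of some winning set within at most `t` further
rounds. In each round Waiter offers two unclaimed elements; Client keeps one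
and the other goes to Waiter (a final single unclaimed element would go to
Client, so it can never help Waiter). -/
def wcWin {X : Type} (F : Set (Set X)) : ℕ → Set X → Set X → Prop
  | 0, W, _ => ∃ e ∈ F, e ⊆ W
  | (t+1), W, C => (∃ e ∈ F, e ⊆ W) ∨
      ∃ x y, x ≠ y ∧ x ∉ W ∪ C ∧ y ∉ W ∪ C ∧
        wcWin F t (insert x W) (insert y C) ∧ wcWin F t (insert y W) (insert x C)

/-- `γ_WC(G)`: the minimum number of rounds within which Dominator (as Waiter)
can guarantee to claim a dominating set in the Waiter-Client domination game on
`G`, and `⊤` (infinity) if she cannot win at all. -/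
noncomputable def gammaWC {V : Type} [Finite V] (G : SimpleGraph V) : ℕ∞ :=
  sInf {n : ℕ∞ | ∃ t : ℕ, n = t ∧ wcWin {D : Set V | IsDomSet G D} t ∅ ∅}

/-- `s_WC(G)`: the minimum size of a dominating set Dominator (as Waiter) can
guarantee to claim in the Waiter-Client domination game on `G` (with no bound
on the number of rounds, `Nat.card V` rounds being enough to exhaust the
board), and `⊤` (infinity) if she cannot win at all. -/
noncomputable def sizeWC {V : Type} [Finite V] (G : SimpleGraph V) : ℕ∞ :=
  sInf {n : ℕ∞ | ∃ s : ℕ, n = s ∧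
    wcWin {D : Set V | IsDomSet G D ∧ D.ncard ≤ s} (Nat.card V) ∅ ∅}

section WCAux

variable {X : Type}

lemma wcWin_step {F : Set (Set X)} : ∀ t {W C : Set X}, wcWin F t W C → wcWin F (t+1) W C := by
  intro t
  induction t with
  | zero => intro W C h; exact Or.inl h
  | succ t ih =>
    intro W C h
    rcases h with h | ⟨x, y, hxy, hx, hy, h1, h2⟩
    · exact Or.inl h
    · exact Or.inr ⟨x, y, hxy, hx, hy, ih h1, ih h2⟩

lemma wcWin_mono {F : Set (Set X)} {t t' : ℕ} (h : t ≤ t') {W C : Set X}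
    (hw : wcWin F t W C) : wcWin F t' W C := by
  induction h with
  | refl => exact hw
  | step _ ih => exact wcWin_step _ ih

lemma not_wcWin_empty : ∀ t {W C : Set X}, ¬ wcWin (∅ : Set (Set X)) t W C := by
  intro t
  induction t with
  | zero => rintro W C ⟨e, he, -⟩; exact (Set.notMem_empty e) he
  | succ t ih =>
    rintro W C (⟨e, he, -⟩ | ⟨x, y, -, -, -, h1, -⟩)
    · exact (Set.notMem_empty e) he
    · exact ih h1

lemma wcWin_down [Finite X] {F : Set (Set X)} :
    ∀ t {W C : Set X}, ((W ∪ C)ᶜ).ncard ≤ 2*t+1 → wcWin F (t+1) W C → wcWin F t W C := by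
  intro t
  induction t with
  | zero =>
    rintro W C hcard (h | ⟨x, y, hxy, hx, hy, -, -⟩)
    · exact h
    · exfalso
      have hsub : ({x, y} : Set X) ⊆ (W ∪ C)ᶜ := by
        rintro z (rfl | rfl)
        · exact hx
        · exact hy
      have hpair : ({x, y} : Set X).ncard = 2 := Set.ncard_pair hxy
      have := Set.ncard_le_ncard hsub (Set.toFinite _)
      omega
  | succ t ih =>
    rintro W C hcard (h | ⟨x, y, hxy, hx, hy, h1, h2⟩)
    · exact Or.inl h
    · have hsub : ({x, y} : Set X) ⊆ (W ∪ C)ᶜ := by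
        rintro z (rfl | rfl)
        · exact hx
        · exact hy
      have hpair : ({x, y} : Set X).ncard = 2 := Set.ncard_pair hxy
      have hdiff := Set.ncard_diff hsub (Set.toFinite _)
      have hle := Set.ncard_le_ncard hsub (Set.toFinite _)
      have heq1 : ((insert x W ∪ insert y C)ᶜ : Set X) = ((W ∪ C)ᶜ) \ {x, y} := by
        ext z; simp only [Set.mem_compl_iff, Set.mem_union, Set.mem_insert_iff,
          Set.mem_diff, Set.mem_singleton_iff, not_or]
        tauto
      have heq2 : ((insert y W ∪ insert x C)ᶜ : Set X) = ((W ∪ C)ᶜ) \ {x, y} := by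
        ext z; simp only [Set.mem_compl_iff, Set.mem_union, Set.mem_insert_iff,
          Set.mem_diff, Set.mem_singleton_iff, not_or]
        tauto
      refine Or.inr ⟨x, y, hxy, hx, hy, ih ?_ h1, ih ?_ h2⟩
      · rw [heq1, hdiff, hpair]; omega
      · rw [heq2, hdiff, hpair]; omega

lemma sInf_shift (P Q : ℕ → Prop) (h : ∀ t, P t ↔ ∃ t', t = t' + 1 ∧ Q t') :
    sInf {n : ℕ∞ | ∃ t : ℕ, n = t ∧ P t} = 1 + sInf {n : ℕ∞ | ∃ t : ℕ, n = t ∧ Q t} := by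
  classical
  by_cases hq : ∃ t, Q t
  · have hQinf : sInf {n : ℕ∞ | ∃ t : ℕ, n = t ∧ Q t} = (Nat.find hq : ℕ∞) := by
      refine le_antisymm (sInf_le ⟨Nat.find hq, rfl, Nat.find_spec hq⟩) (le_sInf ?_)
      rintro n ⟨t, rfl, hQt⟩
      exact_mod_cast Nat.find_min' hq hQt
    rw [hQinf]
    refine le_antisymm ?_ (le_sInf ?_)
    · have hcast : ((Nat.find hq + 1 : ℕ) : ℕ∞) = 1 + (Nat.find hq : ℕ∞) := by
        push_cast; ring
      rw [← hcast]
      exact sInf_le ⟨Nat.find hq + 1, rfl, (h _).mpr ⟨Nat.find hq, rfl, Nat.find_spec hq⟩⟩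
    · rintro n ⟨t, rfl, hPt⟩
      obtain ⟨t', rfl, hQt'⟩ := (h t).mp hPt
      calc (1 : ℕ∞) + (Nat.find hq : ℕ∞) ≤ 1 + (t' : ℕ∞) := by
            exact add_le_add_right (by exact_mod_cast Nat.find_min' hq hQt') 1
        _ = ((t' + 1 : ℕ) : ℕ∞) := by push_cast; ring
  · have hPe : {n : ℕ∞ | ∃ t : ℕ, n = t ∧ P t} = ∅ := by
      refine Set.eq_empty_iff_forall_notMem.mpr ?_
      rintro n ⟨t, rfl, hPt⟩
      obtain ⟨t', -, hQt'⟩ := (h t).mp hPt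
      exact hq ⟨t', hQt'⟩
    have hQe : {n : ℕ∞ | ∃ t : ℕ, n = t ∧ Q t} = ∅ := by
      refine Set.eq_empty_iff_forall_notMem.mpr ?_
      rintro n ⟨t, rfl, hQt⟩
      exact hq ⟨t, hQt⟩
    rw [hPe, hQe, sInf_empty]
    simp

end WCAux

section GraphAux

variable {V : Type} {G : SimpleGraph V} {v w : V}

/-- Any winning (dominating) set inside `W` forces `v ∈ W` or `w ∈ W`. -/
lemma no_dom_subset (hN : G.neighborSet v = {w}) {F : Set (Set V)}
    (hF : ∀ e ∈ F, IsDomSet G e) {W : Set V} (hvW : v ∉ W) (hwW : w ∉ W) :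
    ¬ ∃ e ∈ F, e ⊆ W := by
  rintro ⟨e, he, hsub⟩
  rcases hF e he v with h | ⟨u, hu, hadj⟩
  · exact hvW (hsub h)
  · have hu' : u ∈ G.neighborSet v := (SimpleGraph.mem_neighborSet G v u).mpr hadj.symm
    rw [hN, Set.mem_singleton_iff] at hu'
    exact hwW (hsub (hu' ▸ hu))

/-- Lemma A: if neither `v` nor `w` is Waiter's and one of them is Client's,
Waiter cannot win. -/
lemma no_win_vw_client (hN : G.neighborSet v = {w}) {F : Set (Set V)}
    (hF : ∀ e ∈ F, IsDomSet G e) :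
    ∀ t {W C : Set V}, v ∉ W → w ∉ W → (v ∈ C ∨ w ∈ C) → ¬ wcWin F t W C := by
  intro t
  induction t with
  | zero => intro W C hvW hwW _ h; exact no_dom_subset hN hF hvW hwW h
  | succ t ih =>
    rintro W C hvW hwW hC (h | ⟨x, y, hxy, hx, hy, h1, h2⟩)
    · exact no_dom_subset hN hF hvW hwW h
    · classical
      by_cases hxv : x = v
      · -- Client takes x = v, use h2
        have hwC : w ∈ C := hC.resolve_left (fun hh => hx (Or.inr (hxv ▸ hh)))
        have h2' : wcWin F t (insert y W) (insert v C) := hxv ▸ h2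
        refine ih ?_ ?_ (Or.inl (Set.mem_insert _ _)) h2'
        · intro hh
          rcases Set.mem_insert_iff.mp hh with h' | h'
          · exact hxy (hxv.trans h')
          · exact hvW h'
        · intro hh
          rcases Set.mem_insert_iff.mp hh with h' | h'
          · exact hy (Or.inr (h' ▸ hwC))
          · exact hwW h'
      · by_cases hyv : y = v
        · -- Client takes y = v, use h1
          have hwC : w ∈ C := hC.resolve_left (fun hh => hy (Or.inr (hyv ▸ hh)))
          have h1' : wcWin F t (insert x W) (insert v C) := hyv ▸ h1
          refine ih ?_ ?_ (Or.inl (Set.mem_insert _ _)) h1'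
          · intro hh
            rcases Set.mem_insert_iff.mp hh with h' | h'
            · exact hxv h'.symm
            · exact hvW h'
          · intro hh
            rcases Set.mem_insert_iff.mp hh with h' | h'
            · exact hx (Or.inr (h' ▸ hwC))
            · exact hwW h'
        · by_cases hxw : x = w
          · -- Client takes x = w, use h2
            have hvC : v ∈ C := hC.resolve_right (fun hh => hx (Or.inr (hxw ▸ hh)))
            refine ih ?_ ?_ (Or.inl (Set.mem_insert_of_mem _ hvC)) h2
            · intro hh
              rcases Set.mem_insert_iff.mp hh with h' | h'
              · exact hyv h'.symm
              · exact hvW h'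
            · intro hh
              rcases Set.mem_insert_iff.mp hh with h' | h'
              · exact hxy (hxw.trans h')
              · exact hwW h'
          · by_cases hyw : y = w
            · -- Client takes y = w, use h1
              have h1' : wcWin F t (insert x W) (insert w C) := hyw ▸ h1
              refine ih ?_ ?_ (Or.inr (Set.mem_insert _ _)) h1'
              · intro hh
                rcases Set.mem_insert_iff.mp hh with h' | h'
                · exact hxv h'.symm
                · exact hvW h'
              · intro hh
                rcases Set.mem_insert_iff.mp hh with h' | h'
                · exact hxw h'.symm
                · exact hwW h'
            · -- offer away from v, w; use h1
              refine ih ?_ ?_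
                (hC.imp (Set.mem_insert_of_mem _) (Set.mem_insert_of_mem _)) h1
              · intro hh
                rcases Set.mem_insert_iff.mp hh with h' | h'
                · exact hxv h'.symm
                · exact hvW h'
              · intro hh
                rcases Set.mem_insert_iff.mp hh with h' | h'
                · exact hxw h'.symm
                · exact hwW h'

lemma coe_ne_v {u : ({v, w}ᶜ : Set V)} : (u : V) ≠ v := by
  have := u.2
  simp only [Set.mem_compl_iff, Set.mem_insert_iff, Set.mem_singleton_iff, not_or] at this
  exact this.1

lemma coe_ne_w {u : ({v, w}ᶜ : Set V)} : (u : V) ≠ w := by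
  have := u.2
  simp only [Set.mem_compl_iff, Set.mem_insert_iff, Set.mem_singleton_iff, not_or] at this
  exact this.2

lemma v_not_mem_image {W' : Set ({v, w}ᶜ : Set V)} : v ∉ Subtype.val '' W' := by
  rintro ⟨u, -, hu⟩; exact coe_ne_v hu

lemma w_not_mem_image {W' : Set ({v, w}ᶜ : Set V)} : w ∉ Subtype.val '' W' := by
  rintro ⟨u, -, hu⟩; exact coe_ne_w hu

/-- Transfer of leaf positions from `G` to the induced subgraph. -/
lemma leaf_transfer (hN : G.neighborSet v = {w})
    {F : Set (Set V)} {F' : Set (Set ({v, w}ᶜ : Set V))}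
    (hF : ∀ e ∈ F, IsDomSet G e)
    (hleaf : ∀ e ∈ F, v ∈ e → w ∉ e → (∀ z ∈ e, z ≠ v → z ∈ ({v, w}ᶜ : Set V)) →
      {u : ({v, w}ᶜ : Set V) | (u : V) ∈ e} ∈ F')
    {W' : Set ({v, w}ᶜ : Set V)}
    (h : ∃ e ∈ F, e ⊆ insert v (Subtype.val '' W')) :
    ∃ e' ∈ F', e' ⊆ W' := by
  obtain ⟨e, he, hsub⟩ := h
  have hwe : w ∉ e := by
    intro hw
    rcases Set.mem_insert_iff.mp (hsub hw) with h' | h'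
    · have : G.Adj v w := by
        rw [← SimpleGraph.mem_neighborSet, hN]; exact rfl
      exact this.ne h'.symm
    · exact w_not_mem_image h'
  have hSe : ∀ z ∈ e, z ≠ v → z ∈ ({v, w}ᶜ : Set V) := by
    intro z hz hzv
    rcases Set.mem_insert_iff.mp (hsub hz) with h' | h'
    · exact absurd h' hzv
    · obtain ⟨u, -, hu⟩ := h'
      exact hu ▸ u.2
  have hve : v ∈ e := by
    rcases hF e he v with h' | ⟨u, hu, hadj⟩
    · exact h'
    · have hu' : u ∈ G.neighborSet v := (SimpleGraph.mem_neighborSet G v u).mpr hadj.symm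
      rw [hN, Set.mem_singleton_iff] at hu'
      exact absurd (hu' ▸ hu) hwe
  refine ⟨{u : ({v, w}ᶜ : Set V) | (u : V) ∈ e}, hleaf e he hve hwe hSe, ?_⟩
  intro u hu
  rcases Set.mem_insert_iff.mp (hsub hu) with h' | h'
  · exact absurd h' coe_ne_v
  · obtain ⟨u', hu', huu⟩ := h'
    rwa [← Subtype.val_injective huu] 

end GraphAux

section Transfer

variable {V : Type} {G : SimpleGraph V} {v w : V}

/-- Phase 2: Waiter holds `v`, Client holds `w`; the games coincide. -/
lemma phase2_transfer (hN : G.neighborSet v = {w})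
    {F : Set (Set V)} {F' : Set (Set ({v, w}ᶜ : Set V))}
    (hF : ∀ e ∈ F, IsDomSet G e)
    (hleaf : ∀ e ∈ F, v ∈ e → w ∉ e → (∀ z ∈ e, z ≠ v → z ∈ ({v, w}ᶜ : Set V)) →
      {u : ({v, w}ᶜ : Set V) | (u : V) ∈ e} ∈ F') :
    ∀ t (W' C' : Set ({v, w}ᶜ : Set V)),
      wcWin F t (insert v (Subtype.val '' W')) (insert w (Subtype.val '' C')) →
      wcWin F' t W' C' := by
  intro t
  induction t with
  | zero => intro W' C' h; exact leaf_transfer hN hF hleaf h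
  | succ t ih =>
    rintro W' C' (h | ⟨x, y, hxy, hx, hy, h1, h2⟩)
    · exact Or.inl (leaf_transfer hN hF hleaf h)
    · have hxv : x ≠ v := fun hh => hx (Or.inl (by rw [hh]; exact Set.mem_insert _ _))
      have hxw : x ≠ w := fun hh => hx (Or.inr (by rw [hh]; exact Set.mem_insert _ _))
      have hyv : y ≠ v := fun hh => hy (Or.inl (by rw [hh]; exact Set.mem_insert _ _))
      have hyw : y ≠ w := fun hh => hy (Or.inr (by rw [hh]; exact Set.mem_insert _ _))
      have hxS : x ∈ ({v, w}ᶜ : Set V) := by simp [hxv, hxw]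
      have hyS : y ∈ ({v, w}ᶜ : Set V) := by simp [hyv, hyw]
      refine Or.inr ⟨⟨x, hxS⟩, ⟨y, hyS⟩, ?_, ?_, ?_, ?_, ?_⟩
      · exact fun hh => hxy (congrArg Subtype.val hh)
      · rintro (hh | hh)
        · exact hx (Or.inl (Set.mem_insert_of_mem _ ⟨_, hh, rfl⟩))
        · exact hx (Or.inr (Set.mem_insert_of_mem _ ⟨_, hh, rfl⟩))
      · rintro (hh | hh)
        · exact hy (Or.inl (Set.mem_insert_of_mem _ ⟨_, hh, rfl⟩))
        · exact hy (Or.inr (Set.mem_insert_of_mem _ ⟨_, hh, rfl⟩))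
      · have h1' := h1
        rw [Set.insert_comm x v, Set.insert_comm y w] at h1'
        refine ih _ _ ?_
        rw [Set.image_insert_eq, Set.image_insert_eq]
        exact h1'
      · have h2' := h2
        rw [Set.insert_comm y v, Set.insert_comm x w] at h2'
        refine ih _ _ ?_
        rw [Set.image_insert_eq, Set.image_insert_eq]
        exact h2'

/-- Phase 1: both `v` and `w` unclaimed; Waiter on `G` with `t+1` rounds yields
Waiter on the induced subgraph with `t` rounds. -/
lemma phase1_transfer (hN : G.neighborSet v = {w})
    {F : Set (Set V)} {F' : Set (Set ({v, w}ᶜ : Set V))}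
    (hF : ∀ e ∈ F, IsDomSet G e)
    (hleaf : ∀ e ∈ F, v ∈ e → w ∉ e → (∀ z ∈ e, z ≠ v → z ∈ ({v, w}ᶜ : Set V)) →
      {u : ({v, w}ᶜ : Set V) | (u : V) ∈ e} ∈ F') :
    ∀ t (W' C' : Set ({v, w}ᶜ : Set V)),
      wcWin F (t+1) (Subtype.val '' W') (Subtype.val '' C') → wcWin F' t W' C' := by
  have hvW : ∀ (W' : Set ({v, w}ᶜ : Set V)), v ∉ Subtype.val '' W' :=
    fun _ => v_not_mem_image
  have hwW : ∀ (W' : Set ({v, w}ᶜ : Set V)), w ∉ Subtype.val '' W' :=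
    fun _ => w_not_mem_image
  intro t
  induction t with
  | zero =>
    rintro W' C' (h | ⟨x, y, hxy, hx, hy, h1, h2⟩)
    · exact absurd h (no_dom_subset hN hF (hvW W') (hwW W'))
    · classical
      by_cases hxm : x = v ∨ x = w
      · by_cases hym : y = v ∨ y = w
        · -- the offer is exactly {v, w}
          rcases hxm with h' | h'
          · have hyw : y = w := by
              rcases hym with h'' | h''
              · exact absurd (h'.trans h''.symm) hxy
              · exact h''
            rw [h', hyw] at h1
            exact leaf_transfer hN hF hleaf h1
          · have hyv : y = v := by
              rcases hym with h'' | h''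
              · exact h''
              · exact absurd (h'.trans h''.symm) hxy
            rw [h', hyv] at h2
            exact leaf_transfer hN hF hleaf h2
        · -- x ∈ {v,w}, y ∉ {v,w}: Client takes x, Waiter gets y; impossible leaf
          push_neg at hym
          exfalso
          rcases h2 with ⟨e, he, hsub⟩
          refine no_dom_subset hN hF ?_ ?_ ⟨e, he, hsub⟩
          · intro hh
            rcases Set.mem_insert_iff.mp hh with h' | h'
            · exact hym.1 h'.symm
            · exact hvW W' h'
          · intro hh
            rcases Set.mem_insert_iff.mp hh with h' | h'
            · exact hym.2 h'.symm
            · exact hwW W' h'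
      · -- x ∉ {v,w}: Client takes y, Waiter gets x; impossible leaf
        push_neg at hxm
        exfalso
        rcases h1 with ⟨e, he, hsub⟩
        refine no_dom_subset hN hF ?_ ?_ ⟨e, he, hsub⟩
        · intro hh
          rcases Set.mem_insert_iff.mp hh with h' | h'
          · exact hxm.1 h'.symm
          · exact hvW W' h'
        · intro hh
          rcases Set.mem_insert_iff.mp hh with h' | h'
          · exact hxm.2 h'.symm
          · exact hwW W' h'
  | succ t ih =>
    rintro W' C' (h | ⟨x, y, hxy, hx, hy, h1, h2⟩)
    · exact absurd h (no_dom_subset hN hF (hvW W') (hwW W'))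
    · classical
      by_cases hxm : x = v ∨ x = w
      · by_cases hym : y = v ∨ y = w
        · -- the offer is exactly {v, w}
          rcases hxm with h' | h'
          · have hyw : y = w := by
              rcases hym with h'' | h''
              · exact absurd (h'.trans h''.symm) hxy
              · exact h''
            rw [h', hyw] at h1
            exact phase2_transfer hN hF hleaf (t+1) W' C' h1
          · have hyv : y = v := by
              rcases hym with h'' | h''
              · exact h''
              · exact absurd (h'.trans h''.symm) hxy
            rw [h', hyv] at h2
            exact phase2_transfer hN hF hleaf (t+1) W' C' h2
        · -- x ∈ {v,w}, y ∉ {v,w}: Client takes x; Lemma A kills h2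
          push_neg at hym
          exfalso
          refine no_win_vw_client hN hF (t+1) ?_ ?_ ?_ h2
          · intro hh
            rcases Set.mem_insert_iff.mp hh with h' | h'
            · exact hym.1 h'.symm
            · exact hvW W' h'
          · intro hh
            rcases Set.mem_insert_iff.mp hh with h' | h'
            · exact hym.2 h'.symm
            · exact hwW W' h'
          · rcases hxm with rfl | rfl
            · exact Or.inl (Set.mem_insert _ _)
            · exact Or.inr (Set.mem_insert _ _)
      · by_cases hym : y = v ∨ y = w
        · -- y ∈ {v,w}, x ∉ {v,w}: Client takes y; Lemma A kills h1
          push_neg at hxm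
          exfalso
          refine no_win_vw_client hN hF (t+1) ?_ ?_ ?_ h1
          · intro hh
            rcases Set.mem_insert_iff.mp hh with h' | h'
            · exact hxm.1 h'.symm
            · exact hvW W' h'
          · intro hh
            rcases Set.mem_insert_iff.mp hh with h' | h'
            · exact hxm.2 h'.symm
            · exact hwW W' h'
          · rcases hym with rfl | rfl
            · exact Or.inl (Set.mem_insert _ _)
            · exact Or.inr (Set.mem_insert _ _)
        · -- offer inside the small board: simulate
          push_neg at hxm; push_neg at hym
          have hxS : x ∈ ({v, w}ᶜ : Set V) := by simp [hxm.1, hxm.2]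
          have hyS : y ∈ ({v, w}ᶜ : Set V) := by simp [hym.1, hym.2]
          refine Or.inr ⟨⟨x, hxS⟩, ⟨y, hyS⟩, ?_, ?_, ?_, ?_, ?_⟩
          · exact fun hh => hxy (congrArg Subtype.val hh)
          · rintro (hh | hh)
            · exact hx (Or.inl ⟨_, hh, rfl⟩)
            · exact hx (Or.inr ⟨_, hh, rfl⟩)
          · rintro (hh | hh)
            · exact hy (Or.inl ⟨_, hh, rfl⟩)
            · exact hy (Or.inr ⟨_, hh, rfl⟩)
          · refine ih _ _ ?_
            rw [Set.image_insert_eq, Set.image_insert_eq]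
            exact h1
          · refine ih _ _ ?_
            rw [Set.image_insert_eq, Set.image_insert_eq]
            exact h2

/-- Upper direction: Waiter's strategy on the induced subgraph lifts to `G`
after the first round gave her `z ∈ {v, w}`. -/
lemma upper_transfer {F : Set (Set V)} {F' : Set (Set ({v, w}ᶜ : Set V))} {z z' : V}
    (hz : z ∉ ({v, w}ᶜ : Set V)) (hz' : z' ∉ ({v, w}ᶜ : Set V))
    (hQ : ∀ e' ∈ F', insert z (Subtype.val '' e') ∈ F) :
    ∀ t (W' C' : Set ({v, w}ᶜ : Set V)), wcWin F' t W' C' →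
      wcWin F t (insert z (Subtype.val '' W')) (insert z' (Subtype.val '' C')) := by
  intro t
  induction t with
  | zero =>
    rintro W' C' ⟨e', he', hsub⟩
    exact ⟨insert z (Subtype.val '' e'), hQ e' he',
      Set.insert_subset_insert (Set.image_mono hsub)⟩
  | succ t ih =>
    rintro W' C' (⟨e', he', hsub⟩ | ⟨x', y', hxy, hx, hy, h1, h2⟩)
    · exact Or.inl ⟨insert z (Subtype.val '' e'), hQ e' he',
        Set.insert_subset_insert (Set.image_mono hsub)⟩
    · refine Or.inr ⟨(x' : V), (y' : V), ?_, ?_, ?_, ?_, ?_⟩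
      · exact fun hh => hxy (Subtype.val_injective hh)
      · rintro (hh | hh)
        · rcases Set.mem_insert_iff.mp hh with h' | h'
          · exact hz (h' ▸ x'.2)
          · obtain ⟨u, hu, huu⟩ := h'
            exact hx (Or.inl (by rwa [← Subtype.val_injective huu]))
        · rcases Set.mem_insert_iff.mp hh with h' | h'
          · exact hz' (h' ▸ x'.2)
          · obtain ⟨u, hu, huu⟩ := h'
            exact hx (Or.inr (by rwa [← Subtype.val_injective huu]))
      · rintro (hh | hh)
        · rcases Set.mem_insert_iff.mp hh with h' | h'
          · exact hz (h' ▸ y'.2)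
          · obtain ⟨u, hu, huu⟩ := h'
            exact hy (Or.inl (by rwa [← Subtype.val_injective huu]))
        · rcases Set.mem_insert_iff.mp hh with h' | h'
          · exact hz' (h' ▸ y'.2)
          · obtain ⟨u, hu, huu⟩ := h'
            exact hy (Or.inr (by rwa [← Subtype.val_injective huu]))
      · have := ih (insert x' W') (insert y' C') h1
        rw [Set.image_insert_eq, Set.image_insert_eq,
          Set.insert_comm z (x' : V), Set.insert_comm z' (y' : V)] at this
        exact this
      · have := ih (insert y' W') (insert x' C') h2
        rw [Set.image_insert_eq, Set.image_insert_eq,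
          Set.insert_comm z (y' : V), Set.insert_comm z' (x' : V)] at this
        exact this

end Transfer

/-- Lemma 4.1. If `G` contains an edge `vw` with
`deg(v) = 1` and `deg(w) = 2`, then `γ_WC(G) = 1 + γ_WC(G - {v, w})` and
`s_WC(G) = 1 + s_WC(G - {v, w})`. -/
theorem wc_domination_leaf_reduction {V : Type} [Finite V] (G : SimpleGraph V)
    (v w : V) (hvw : G.Adj v w)
    (hv : (G.neighborSet v).ncard = 1) (hw : (G.neighborSet w).ncard = 2) :
    gammaWC G = 1 + gammaWC (G.induce ({v, w}ᶜ : Set V)) ∧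
    sizeWC G = 1 + sizeWC (G.induce ({v, w}ᶜ : Set V)) := by
    classical
  have hne : v ≠ w := hvw.ne
  have hwmem : w ∈ G.neighborSet v := (SimpleGraph.mem_neighborSet G v w).mpr hvw
  have hN : G.neighborSet v = {w} := by
    obtain ⟨a, ha⟩ := Set.ncard_eq_one.mp hv
    rw [ha] at hwmem ⊢
    rw [Set.mem_singleton_iff] at hwmem
    rw [hwmem]
  -- restriction of a dominating set of `G` avoiding `w`
  have hdom_restrict : ∀ e : Set V, IsDomSet G e → w ∉ e →
      (∀ z ∈ e, z ≠ v → z ∈ ({v, w}ᶜ : Set V)) →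
      IsDomSet (G.induce ({v, w}ᶜ : Set V)) {u : ({v, w}ᶜ : Set V) | (u : V) ∈ e} := by
    intro e he hwe hSe u
    rcases he (u : V) with h | ⟨z, hz, hadj⟩
    · exact Or.inl h
    · have hzv : z ≠ v := by
        intro hzeq
        rw [hzeq] at hadj
        have hmem : (u : V) ∈ G.neighborSet v := (SimpleGraph.mem_neighborSet _ _ _).mpr hadj
        rw [hN, Set.mem_singleton_iff] at hmem
        exact coe_ne_w hmem
      exact Or.inr ⟨⟨z, hSe z hz hzv⟩, hz, hadj⟩
  -- extension of a dominating set of the induced subgraph by `v` or `w`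
  have hdom_insert : ∀ z : V, z = v ∨ z = w → ∀ e' : Set ({v, w}ᶜ : Set V),
      IsDomSet (G.induce ({v, w}ᶜ : Set V)) e' →
      IsDomSet G (insert z (Subtype.val '' e')) := by
    intro z hz e' he' u
    by_cases huS : u ∈ ({v, w}ᶜ : Set V)
    · rcases he' ⟨u, huS⟩ with h | ⟨z'', hz'', hadj⟩
      · exact Or.inl (Set.mem_insert_of_mem _ ⟨_, h, rfl⟩)
      · exact Or.inr ⟨(z'' : V), Set.mem_insert_of_mem _ ⟨z'', hz'', rfl⟩, hadj⟩
    · have hu : u = v ∨ u = w := by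
        simp only [Set.mem_compl_iff, Set.mem_insert_iff, Set.mem_singleton_iff,
          not_or, not_not] at huS
        tauto
      rcases hz with h | h
      · rcases hu with h' | h'
        · rw [h, h']; exact Or.inl (Set.mem_insert _ _)
        · rw [h, h']; exact Or.inr ⟨v, Set.mem_insert _ _, hvw⟩
      · rcases hu with h' | h'
        · rw [h, h']; exact Or.inr ⟨w, Set.mem_insert _ _, hvw.symm⟩
        · rw [h, h']; exact Or.inl (Set.mem_insert _ _)
  constructor
  · -- the γ_WC statement
    have hFg : ∀ e ∈ {D : Set V | IsDomSet G D}, IsDomSet G e := fun _ he => he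
    have hleafg : ∀ e ∈ {D : Set V | IsDomSet G D}, v ∈ e → w ∉ e →
        (∀ z ∈ e, z ≠ v → z ∈ ({v, w}ᶜ : Set V)) →
        {u : ({v, w}ᶜ : Set V) | (u : V) ∈ e} ∈
          {D : Set ({v, w}ᶜ : Set V) | IsDomSet (G.induce ({v, w}ᶜ : Set V)) D} :=
      fun e he _ hwe hSe => hdom_restrict e he hwe hSe
    have keyg : ∀ t : ℕ, wcWin {D : Set V | IsDomSet G D} t ∅ ∅ ↔
        ∃ t', t = t' + 1 ∧
          wcWin {D : Set ({v, w}ᶜ : Set V) |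
            IsDomSet (G.induce ({v, w}ᶜ : Set V)) D} t' ∅ ∅ := by
      intro t
      constructor
      · intro h
        cases t with
        | zero =>
          exact absurd h (no_dom_subset hN hFg (Set.notMem_empty v) (Set.notMem_empty w))
        | succ t =>
          refine ⟨t, rfl, ?_⟩
          refine phase1_transfer hN hFg hleafg t ∅ ∅ ?_
          rw [Set.image_empty]
          exact h
      · rintro ⟨t', rfl, h⟩
        have hQvg : ∀ e' ∈ {D : Set ({v, w}ᶜ : Set V) |
            IsDomSet (G.induce ({v, w}ᶜ : Set V)) D},
            insert v (Subtype.val '' e') ∈ {D : Set V | IsDomSet G D} :=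
          fun e' he' => hdom_insert v (Or.inl rfl) e' he'
        have hQwg : ∀ e' ∈ {D : Set ({v, w}ᶜ : Set V) |
            IsDomSet (G.induce ({v, w}ᶜ : Set V)) D},
            insert w (Subtype.val '' e') ∈ {D : Set V | IsDomSet G D} :=
          fun e' he' => hdom_insert w (Or.inr rfl) e' he'
        refine Or.inr ⟨v, w, hne, by simp, by simp, ?_, ?_⟩
        · have := upper_transfer (by simp : v ∉ ({v, w}ᶜ : Set V))
            (by simp : w ∉ ({v, w}ᶜ : Set V)) hQvg t' ∅ ∅ h
          rwa [Set.image_empty] at this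
        · have := upper_transfer (by simp : w ∉ ({v, w}ᶜ : Set V))
            (by simp : v ∉ ({v, w}ᶜ : Set V)) hQwg t' ∅ ∅ h
          rwa [Set.image_empty] at this
    unfold gammaWC
    exact sInf_shift _ _ keyg
  · -- the s_WC statement
    have hpair2 : ({v, w} : Set V).ncard = 2 := Set.ncard_pair hne
    have hsplit := Set.ncard_add_ncard_compl ({v, w} : Set V)
    have hcoe : Nat.card ({v, w}ᶜ : Set V) = (({v, w}ᶜ : Set V)).ncard :=
      Nat.card_coe_set_eq _
    have hNV : Nat.card V = (({v, w}ᶜ : Set V)).ncard + 2 := by omega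
    have keys : ∀ s : ℕ,
        wcWin {D : Set V | IsDomSet G D ∧ D.ncard ≤ s} (Nat.card V) ∅ ∅ ↔
        ∃ s', s = s' + 1 ∧
          wcWin {D : Set ({v, w}ᶜ : Set V) |
              IsDomSet (G.induce ({v, w}ᶜ : Set V)) D ∧ D.ncard ≤ s'}
            (Nat.card ({v, w}ᶜ : Set V)) ∅ ∅ := by
      intro s
      constructor
      · intro h
        cases s with
        | zero =>
          exfalso
          have hempty : {D : Set V | IsDomSet G D ∧ D.ncard ≤ (0 : ℕ)} = ∅ := by
            ext e
            simp only [Set.mem_setOf_eq, Set.mem_empty_iff_false, iff_false, not_and]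
            intro hd hc
            have he : e = ∅ := (Set.ncard_eq_zero (Set.toFinite e)).mp (Nat.le_zero.mp hc)
            rcases hd v with h' | ⟨u, hu, -⟩
            · rw [he] at h'; exact h'
            · rw [he] at hu; exact hu
          rw [hempty] at h
          exact not_wcWin_empty _ h
        | succ s' =>
          refine ⟨s', rfl, ?_⟩
          have hFs : ∀ e ∈ {D : Set V | IsDomSet G D ∧ D.ncard ≤ s' + 1}, IsDomSet G e :=
            fun _ he => he.1
          have hleafs : ∀ e ∈ {D : Set V | IsDomSet G D ∧ D.ncard ≤ s' + 1},
              v ∈ e → w ∉ e → (∀ z ∈ e, z ≠ v → z ∈ ({v, w}ᶜ : Set V)) →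
              {u : ({v, w}ᶜ : Set V) | (u : V) ∈ e} ∈
                {D : Set ({v, w}ᶜ : Set V) |
                  IsDomSet (G.induce ({v, w}ᶜ : Set V)) D ∧ D.ncard ≤ s'} := by
            intro e he hve hwe hSe
            refine ⟨hdom_restrict e he.1 hwe hSe, ?_⟩
            have himg : Subtype.val '' {u : ({v, w}ᶜ : Set V) | (u : V) ∈ e} = e \ {v} := by
              ext z
              constructor
              · rintro ⟨u, hu, rfl⟩
                exact ⟨hu, by simpa using (coe_ne_v : (u : V) ≠ v)⟩
              · rintro ⟨hz1, hz2⟩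
                have hz2' : z ≠ v := by simpa using hz2
                exact ⟨⟨z, hSe z hz1 hz2'⟩, hz1, rfl⟩
            have hcard1 : ({u : ({v, w}ᶜ : Set V) | (u : V) ∈ e}).ncard = (e \ {v}).ncard := by
              rw [← himg, Set.ncard_image_of_injective _ Subtype.val_injective]
            have hcard2 : (e \ {v}).ncard = e.ncard - 1 :=
              Set.ncard_diff_singleton_of_mem hve
            have hpos : 0 < e.ncard := (Set.ncard_pos (Set.toFinite e)).mpr ⟨v, hve⟩
            have hle := he.2
            rw [hcard1, hcard2]
            omega
          rw [hNV] at h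
          have h1 := phase1_transfer hN hFs hleafs ((({v, w}ᶜ : Set V)).ncard + 1) ∅ ∅
            (by rw [Set.image_empty]; exact h)
          have hc : (((∅ ∪ ∅ : Set ({v, w}ᶜ : Set V)))ᶜ).ncard ≤
              2 * (({v, w}ᶜ : Set V)).ncard + 1 := by
            rw [Set.union_empty, Set.compl_empty, Set.ncard_univ, hcoe]
            omega
          have h2 := wcWin_down _ hc h1
          rwa [hcoe]
      · rintro ⟨s', rfl, h⟩
        have hQv : ∀ e' ∈ {D : Set ({v, w}ᶜ : Set V) |
            IsDomSet (G.induce ({v, w}ᶜ : Set V)) D ∧ D.ncard ≤ s'},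
            insert v (Subtype.val '' e') ∈
              {D : Set V | IsDomSet G D ∧ D.ncard ≤ s' + 1} := by
          intro e' he'
          refine ⟨hdom_insert v (Or.inl rfl) e' he'.1, ?_⟩
          calc (insert v (Subtype.val '' e')).ncard ≤ (Subtype.val '' e').ncard + 1 :=
                Set.ncard_insert_le _ _
            _ = e'.ncard + 1 := by rw [Set.ncard_image_of_injective _ Subtype.val_injective]
            _ ≤ s' + 1 := by have := he'.2; omega
        have hQw : ∀ e' ∈ {D : Set ({v, w}ᶜ : Set V) |
            IsDomSet (G.induce ({v, w}ᶜ : Set V)) D ∧ D.ncard ≤ s'},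
            insert w (Subtype.val '' e') ∈
              {D : Set V | IsDomSet G D ∧ D.ncard ≤ s' + 1} := by
          intro e' he'
          refine ⟨hdom_insert w (Or.inr rfl) e' he'.1, ?_⟩
          calc (insert w (Subtype.val '' e')).ncard ≤ (Subtype.val '' e').ncard + 1 :=
                Set.ncard_insert_le _ _
            _ = e'.ncard + 1 := by rw [Set.ncard_image_of_injective _ Subtype.val_injective]
            _ ≤ s' + 1 := by have := he'.2; omega
        rw [hcoe] at h
        have b1 := upper_transfer (by simp : v ∉ ({v, w}ᶜ : Set V))
          (by simp : w ∉ ({v, w}ᶜ : Set V)) hQv ((({v, w}ᶜ : Set V)).ncard) ∅ ∅ h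
        have b2 := upper_transfer (by simp : w ∉ ({v, w}ᶜ : Set V))
          (by simp : v ∉ ({v, w}ᶜ : Set V)) hQw ((({v, w}ᶜ : Set V)).ncard) ∅ ∅ h
        rw [Set.image_empty] at b1 b2
        rw [hNV]
        show wcWin _ ((({v, w}ᶜ : Set V)).ncard + 1 + 1) ∅ ∅
        exact Or.inr ⟨v, w, hne, by simp, by simp,
          wcWin_mono (Nat.le_succ _) b1, wcWin_mono (Nat.le_succ _) b2⟩
    unfold sizeWC
    exact sInf_shift _ _ keys
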